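/- Let K₁, K₂ be compact Hausdorff spaces, ν a regular Borel probability measure on K₁ × K₂, and (ν_γ) a net of regular Borel probability measures on K₁ × K₂ all having the same marginal distributions (μ₁, μ₂) as ν. If ν_γ converges to ν in the weak* topology, then lim_γ ν_γ(A₁ × A₂) = ν(A₁ × A₂) for all Borel A₁ ⊆ K₁ and A₂ ⊆ K₂. -/

import Mathlib

open MeasureTheory Filter

/-- If a net of regular Borel probability measures on `K₁ × K₂`, all with the same
(regular) marginals as `ν`, converges to `ν` weak*, then the measures of all Borel
rectangles converge: `ν_γ(A₁ × A₂) → ν(A₁ × A₂)`. -/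
theorem stmt6 {K₁ K₂ : Type*}
    [TopologicalSpace K₁] [CompactSpace K₁] [T2Space K₁] [MeasurableSpace K₁] [BorelSpace K₁]
    [TopologicalSpace K₂] [CompactSpace K₂] [T2Space K₂] [MeasurableSpace K₂] [BorelSpace K₂]
    {Γ : Type*} [Preorder Γ] [Nonempty Γ] [IsDirected Γ (· ≤ ·)]
    (ν : Γ → Measure (K₁ × K₂)) (νlim : Measure (K₁ × K₂))
    (hprob : ∀ γ, IsProbabilityMeasure (ν γ)) (hreg : ∀ γ, (ν γ).Regular)
    (hproblim : IsProbabilityMeasure νlim) (hreglim : νlim.Regular)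
    (μ₁ : Measure K₁) (μ₂ : Measure K₂) [μ₁.Regular] [μ₂.Regular]
    (hm₁ : ∀ γ, ∀ A : Set K₁, MeasurableSet A → ν γ (A ×ˢ Set.univ) = μ₁ A)
    (hm₂ : ∀ γ, ∀ B : Set K₂, MeasurableSet B → ν γ (Set.univ ×ˢ B) = μ₂ B)
    (hmlim₁ : ∀ A : Set K₁, MeasurableSet A → νlim (A ×ˢ Set.univ) = μ₁ A)
    (hmlim₂ : ∀ B : Set K₂, MeasurableSet B → νlim (Set.univ ×ˢ B) = μ₂ B)
    (hweak : ∀ f : C(K₁ × K₂, ℝ),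
      Tendsto (fun γ => ∫ z, f z ∂(ν γ)) atTop (nhds (∫ z, f z ∂νlim))) :
    ∀ A₁ : Set K₁, MeasurableSet A₁ → ∀ A₂ : Set K₂, MeasurableSet A₂ →
      Tendsto (fun γ => (ν γ (A₁ ×ˢ A₂)).toReal) atTop
        (nhds ((νlim (A₁ ×ˢ A₂)).toReal)) := by
  intro A₁ mA₁ A₂ mA₂
  haveI : IsProbabilityMeasure μ₁ := ⟨by
    rw [← hmlim₁ Set.univ MeasurableSet.univ, Set.univ_prod_univ]; exact measure_univ⟩
  haveI : IsProbabilityMeasure μ₂ := ⟨by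
    rw [← hmlim₂ Set.univ MeasurableSet.univ, Set.univ_prod_univ]; exact measure_univ⟩
  rw [Metric.tendsto_nhds]
  intro ε hε
  set δ : ℝ := ε / 8 with hδdef
  have hδ : 0 < δ := by positivity
  have hδ0 : ENNReal.ofReal δ ≠ 0 := (ENNReal.ofReal_pos.mpr hδ).ne'
  obtain ⟨L₁, hL₁A, hL₁c, hL₁m⟩ := mA₁.exists_isCompact_diff_lt (measure_ne_top μ₁ _) hδ0
  obtain ⟨L₂, hL₂A, hL₂c, hL₂m⟩ := mA₂.exists_isCompact_diff_lt (measure_ne_top μ₂ _) hδ0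
  obtain ⟨U₁, hAU₁, hU₁o, -, hU₁m⟩ := mA₁.exists_isOpen_diff_lt (measure_ne_top μ₁ _) hδ0
  obtain ⟨U₂, hAU₂, hU₂o, -, hU₂m⟩ := mA₂.exists_isOpen_diff_lt (measure_ne_top μ₂ _) hδ0
  -- Urysohn functions on the factors
  obtain ⟨g₁, hg₁U, hg₁L, hg₁01⟩ := exists_continuous_zero_one_of_isClosed
    hU₁o.isClosed_compl hL₁c.isClosed
    (Set.disjoint_left.mpr fun x hx hxL => hx (hAU₁ (hL₁A hxL)))
  obtain ⟨g₂, hg₂U, hg₂L, hg₂01⟩ := exists_continuous_zero_one_of_isClosed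
    hU₂o.isClosed_compl hL₂c.isClosed
    (Set.disjoint_left.mpr fun x hx hxL => hx (hAU₂ (hL₂A hxL)))
  set F : C(K₁ × K₂, ℝ) := (g₁.comp ContinuousMap.fst) * (g₂.comp ContinuousMap.snd) with hFdef
  have hFapp : ∀ z : K₁ × K₂, F z = g₁ z.1 * g₂ z.2 := fun z => rfl
  have hF0 : ∀ z, 0 ≤ F z := fun z => mul_nonneg (hg₁01 z.1).1 (hg₂01 z.2).1
  have hF1 : ∀ z, F z ≤ 1 := fun z =>
    mul_le_one₀ (hg₁01 z.1).2 (hg₂01 z.2).1 (hg₂01 z.2).2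
  have hFL : ∀ z ∈ L₁ ×ˢ L₂, F z = 1 := by
    rintro ⟨x, y⟩ ⟨hx, hy⟩
    have h1 : g₁ x = 1 := hg₁L hx
    have h2 : g₂ y = 1 := hg₂L hy
    simp [hFapp, h1, h2]
  have hFU : ∀ z ∉ U₁ ×ˢ U₂, F z = 0 := by
    rintro ⟨x, y⟩ hz
    by_cases h1 : x ∈ U₁
    · have h2 : y ∉ U₂ := fun h2 => hz ⟨h1, h2⟩
      have : g₂ y = 0 := hg₂U h2
      simp [hFapp, this]
    · have : g₁ x = 0 := hg₁U h1
      simp [hFapp, this]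
  have hFm : Measurable F :=
    (g₁.continuous.measurable.comp measurable_fst).mul
      (g₂.continuous.measurable.comp measurable_snd)
  have mL : MeasurableSet (L₁ ×ˢ L₂) := hL₁c.measurableSet.prod hL₂c.measurableSet
  have mU : MeasurableSet (U₁ ×ˢ U₂) := hU₁o.measurableSet.prod hU₂o.measurableSet
  have mAL₁ : MeasurableSet (A₁ \ L₁) := mA₁.diff hL₁c.measurableSet
  have mAL₂ : MeasurableSet (A₂ \ L₂) := mA₂.diff hL₂c.measurableSet
  have mUA₁ : MeasurableSet (U₁ \ A₁) := hU₁o.measurableSet.diff mA₁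
  have mUA₂ : MeasurableSet (U₂ \ A₂) := hU₂o.measurableSet.diff mA₂
  have d1 : (μ₁ (A₁ \ L₁)).toReal < δ := by
    have := (ENNReal.toReal_lt_toReal (measure_ne_top μ₁ _) ENNReal.ofReal_ne_top).mpr hL₁m
    rwa [ENNReal.toReal_ofReal hδ.le] at this
  have d2 : (μ₂ (A₂ \ L₂)).toReal < δ := by
    have := (ENNReal.toReal_lt_toReal (measure_ne_top μ₂ _) ENNReal.ofReal_ne_top).mpr hL₂m
    rwa [ENNReal.toReal_ofReal hδ.le] at this
  have d3 : (μ₁ (U₁ \ A₁)).toReal < δ := by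
    have := (ENNReal.toReal_lt_toReal (measure_ne_top μ₁ _) ENNReal.ofReal_ne_top).mpr hU₁m
    rwa [ENNReal.toReal_ofReal hδ.le] at this
  have d4 : (μ₂ (U₂ \ A₂)).toReal < δ := by
    have := (ENNReal.toReal_lt_toReal (measure_ne_top μ₂ _) ENNReal.ofReal_ne_top).mpr hU₂m
    rwa [ENNReal.toReal_ofReal hδ.le] at this
  have key : ∀ τ : Measure (K₁ × K₂), IsProbabilityMeasure τ →
      (∀ A : Set K₁, MeasurableSet A → τ (A ×ˢ Set.univ) = μ₁ A) →
      (∀ B : Set K₂, MeasurableSet B → τ (Set.univ ×ˢ B) = μ₂ B) →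
      |∫ z, F z ∂τ - (τ (A₁ ×ˢ A₂)).toReal| ≤ 2 * δ := by
    intro τ hτ hτ₁ hτ₂
    haveI := hτ
    have hFi : Integrable (⇑F) τ :=
      (integrable_const (1 : ℝ)).mono' hFm.aestronglyMeasurable
        (Filter.Eventually.of_forall fun z => by
          rw [Real.norm_eq_abs, abs_of_nonneg (hF0 z)]; exact hF1 z)
    have lowI : (τ (L₁ ×ˢ L₂)).toReal ≤ ∫ z, F z ∂τ := by
      rw [← measureReal_def, ← integral_indicator_one mL]
      refine integral_mono ((integrable_const 1).indicator mL) hFi fun z => ?_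
      by_cases hz : z ∈ L₁ ×ˢ L₂
      · simp only [Set.indicator_of_mem hz, Pi.one_apply]
        exact (hFL z hz).ge
      · simp only [Set.indicator_of_notMem hz]
        exact hF0 z
    have highI : ∫ z, F z ∂τ ≤ (τ (U₁ ×ˢ U₂)).toReal := by
      rw [← measureReal_def, ← integral_indicator_one mU]
      refine integral_mono hFi ((integrable_const 1).indicator mU) fun z => ?_
      by_cases hz : z ∈ U₁ ×ˢ U₂
      · simp only [Set.indicator_of_mem hz, Pi.one_apply]
        exact hF1 z
      · simp only [Set.indicator_of_notMem hz]
        exact (hFU z hz).le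
    have hsub1 : A₁ ×ˢ A₂ ⊆
        (L₁ ×ˢ L₂) ∪ ((A₁ \ L₁) ×ˢ (Set.univ : Set K₂) ∪ (Set.univ : Set K₁) ×ˢ (A₂ \ L₂)) := by
      rintro ⟨x, y⟩ ⟨hx, hy⟩
      by_cases h1 : x ∈ L₁
      · by_cases h2 : y ∈ L₂
        · exact Or.inl ⟨h1, h2⟩
        · exact Or.inr (Or.inr ⟨Set.mem_univ x, hy, h2⟩)
      · exact Or.inr (Or.inl ⟨⟨hx, h1⟩, Set.mem_univ y⟩)
    have hsub2 : U₁ ×ˢ U₂ ⊆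
        (A₁ ×ˢ A₂) ∪ ((U₁ \ A₁) ×ˢ (Set.univ : Set K₂) ∪ (Set.univ : Set K₁) ×ˢ (U₂ \ A₂)) := by
      rintro ⟨x, y⟩ ⟨hx, hy⟩
      by_cases h1 : x ∈ A₁
      · by_cases h2 : y ∈ A₂
        · exact Or.inl ⟨h1, h2⟩
        · exact Or.inr (Or.inr ⟨Set.mem_univ x, hy, h2⟩)
      · exact Or.inr (Or.inl ⟨⟨hx, h1⟩, Set.mem_univ y⟩)
    have hub1 : τ (A₁ ×ˢ A₂) ≤ τ (L₁ ×ˢ L₂) + (μ₁ (A₁ \ L₁) + μ₂ (A₂ \ L₂)) := by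
      calc τ (A₁ ×ˢ A₂) ≤ τ ((L₁ ×ˢ L₂) ∪
            ((A₁ \ L₁) ×ˢ (Set.univ : Set K₂) ∪ (Set.univ : Set K₁) ×ˢ (A₂ \ L₂))) :=
          measure_mono hsub1
        _ ≤ τ (L₁ ×ˢ L₂) +
            τ ((A₁ \ L₁) ×ˢ (Set.univ : Set K₂) ∪ (Set.univ : Set K₁) ×ˢ (A₂ \ L₂)) :=
          measure_union_le _ _
        _ ≤ τ (L₁ ×ˢ L₂) +
            (τ ((A₁ \ L₁) ×ˢ (Set.univ : Set K₂)) + τ ((Set.univ : Set K₁) ×ˢ (A₂ \ L₂))) :=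
          add_le_add le_rfl (measure_union_le _ _)
        _ = τ (L₁ ×ˢ L₂) + (μ₁ (A₁ \ L₁) + μ₂ (A₂ \ L₂)) := by
          rw [hτ₁ _ mAL₁, hτ₂ _ mAL₂]
    have hub2 : τ (U₁ ×ˢ U₂) ≤ τ (A₁ ×ˢ A₂) + (μ₁ (U₁ \ A₁) + μ₂ (U₂ \ A₂)) := by
      calc τ (U₁ ×ˢ U₂) ≤ τ ((A₁ ×ˢ A₂) ∪
            ((U₁ \ A₁) ×ˢ (Set.univ : Set K₂) ∪ (Set.univ : Set K₁) ×ˢ (U₂ \ A₂))) :=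
          measure_mono hsub2
        _ ≤ τ (A₁ ×ˢ A₂) +
            τ ((U₁ \ A₁) ×ˢ (Set.univ : Set K₂) ∪ (Set.univ : Set K₁) ×ˢ (U₂ \ A₂)) :=
          measure_union_le _ _
        _ ≤ τ (A₁ ×ˢ A₂) +
            (τ ((U₁ \ A₁) ×ˢ (Set.univ : Set K₂)) + τ ((Set.univ : Set K₁) ×ˢ (U₂ \ A₂))) :=
          add_le_add le_rfl (measure_union_le _ _)
        _ = τ (A₁ ×ˢ A₂) + (μ₁ (U₁ \ A₁) + μ₂ (U₂ \ A₂)) := by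
          rw [hτ₁ _ mUA₁, hτ₂ _ mUA₂]
    have r1 : (τ (A₁ ×ˢ A₂)).toReal ≤
        (τ (L₁ ×ˢ L₂)).toReal + ((μ₁ (A₁ \ L₁)).toReal + (μ₂ (A₂ \ L₂)).toReal) := by
      have h := ENNReal.toReal_mono (by finiteness) hub1
      rwa [ENNReal.toReal_add (measure_ne_top τ _) (by finiteness),
        ENNReal.toReal_add (measure_ne_top μ₁ _) (measure_ne_top μ₂ _)] at h
    have r2 : (τ (U₁ ×ˢ U₂)).toReal ≤
        (τ (A₁ ×ˢ A₂)).toReal + ((μ₁ (U₁ \ A₁)).toReal + (μ₂ (U₂ \ A₂)).toReal) := by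
      have h := ENNReal.toReal_mono (by finiteness) hub2
      rwa [ENNReal.toReal_add (measure_ne_top τ _) (by finiteness),
        ENNReal.toReal_add (measure_ne_top μ₁ _) (measure_ne_top μ₂ _)] at h
    rw [abs_le]
    constructor <;> [linarith; linarith]
  have hev := Metric.tendsto_nhds.mp (hweak F) δ hδ
  filter_upwards [hev] with γ hγ
  have k1 := key (ν γ) (hprob γ) (hm₁ γ) (hm₂ γ)
  have k2 := key νlim hproblim hmlim₁ hmlim₂
  rw [Real.dist_eq] at hγ ⊢
  have htri : |(ν γ (A₁ ×ˢ A₂)).toReal - (νlim (A₁ ×ˢ A₂)).toReal| ≤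
      |(ν γ (A₁ ×ˢ A₂)).toReal - ∫ z, F z ∂(ν γ)| +
      (|∫ z, F z ∂(ν γ) - ∫ z, F z ∂νlim| + |∫ z, F z ∂νlim - (νlim (A₁ ×ˢ A₂)).toReal|) :=
    (abs_sub_le _ _ _).trans (add_le_add le_rfl (abs_sub_le _ _ _))
  rw [abs_sub_comm] at k1
  linarith
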